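/- Let X be a Hilbert space, A, B nonempty closed convex subsets, v the displacement vector, E = A ∩ (B - v) nonempty. Then for all e ∈ E and a ∈ A, ⟨v, a - e⟩ ≤ 0. -/

import Mathlib

open Pointwise RealInnerProductSpace

/-- `p` is the metric projection of `x` onto the set `C`. -/
def IsProjPt {X : Type*} [NormedAddCommGroup X] (C : Set X) (x p : X) : Prop :=
  p ∈ C ∧ ∀ y ∈ C, dist x p ≤ dist x y

theorem stmt19 {X : Type*} [NormedAddCommGroup X] [InnerProductSpace ℝ X] [CompleteSpace X]
    (A B : Set X) (hAne : A.Nonempty) (hBne : B.Nonempty)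
    (hAc : IsClosed A) (hBc : IsClosed B) (hAconv : Convex ℝ A) (hBconv : Convex ℝ B)
    (v : X) (hv : IsProjPt (closure (B - A)) 0 v)
    (E : Set X) (hE : E = A ∩ ((· - v) '' B)) (hEne : E.Nonempty) :
    ∀ e ∈ E, ∀ a ∈ A, ⟪v, a - e⟫ ≤ 0 := by
  obtain ⟨hvK, hvmin⟩ := hv
  set K := closure (B - A) with hK
  have hKconv : Convex ℝ K := (hBconv.sub hAconv).closure
  haveI : Nonempty K := ⟨⟨v, hvK⟩⟩
  have hmin : ‖(0 : X) - v‖ = ⨅ w : K, ‖(0 : X) - w‖ := by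
    refine le_antisymm (le_ciInf fun w => ?_) ?_
    · simpa [dist_eq_norm] using hvmin w w.2
    · exact ciInf_le ⟨0, fun _ ⟨_, h⟩ => h ▸ norm_nonneg _⟩ (⟨v, hvK⟩ : K)
  have hchar := (norm_eq_iInf_iff_real_inner_le_zero hKconv hvK).1 hmin
  intro e he a ha
  rw [hE] at he
  obtain ⟨heA, b, hbB, hbe⟩ := he
  have hw : b - a ∈ K := subset_closure (Set.sub_mem_sub hbB ha)
  have h := hchar (b - a) hw
  rw [zero_sub, inner_neg_left] at h
  have : e - a = b - a - v := by rw [← hbe]; show b - v - a = b - a - v; abel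
  have h2 : (0:ℝ) ≤ ⟪v, e - a⟫ := by rw [this]; linarith
  have : ⟪v, a - e⟫ = -⟪v, e - a⟫ := by
    rw [← inner_neg_right]; congr 1; abel
  linarith [this ▸ neg_nonpos_of_nonneg h2]
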